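/- Let V be a finite-dimensional vector space over ZMod 2, let B be a nondegenerate symmetric bilinear form on V, and let q be a ℤ/4-quadratic enhancement of B. Then the Gauss sum S(q) = Σ_{x ∈ V} I^{(q x).val} has squared absolute value equal to the cardinality of V: Complex.abs (S(q))^2 = Fintype.card V. -/

import Mathlib

noncomputable def f4 (a : ZMod 4) : ℂ := Complex.I ^ a.val

lemma I_pow_mod4 (n : ℕ) : Complex.I ^ (n % 4) = Complex.I ^ n := by
  conv_rhs => rw [← Nat.div_add_mod n 4, pow_add, pow_mul, Complex.I_pow_four, one_pow, one_mul]

lemma f4_add (a b : ZMod 4) : f4 (a + b) = f4 a * f4 b := by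
  unfold f4
  rw [ZMod.val_add, I_pow_mod4, pow_add]

lemma f4_zero : f4 0 = 1 := by simp [f4]

lemma f4_ne_zero (a : ZMod 4) : f4 a ≠ 0 := pow_ne_zero _ Complex.I_ne_zero

lemma f4_conj (a : ZMod 4) : (starRingEnd ℂ) (f4 a) = f4 (-a) := by
  have h1 : (starRingEnd ℂ) (f4 a) * f4 a = 1 := by
    unfold f4
    rw [map_pow, Complex.conj_I, ← mul_pow]
    norm_num
  have h2 : f4 (-a) * f4 a = 1 := by rw [← f4_add, neg_add_cancel, f4_zero]
  exact mul_right_cancel₀ (f4_ne_zero a) (h1.trans h2.symm)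

noncomputable def e2 (b : ZMod 2) : ℂ := (-1) ^ b.val

lemma e2_zero : e2 0 = 1 := by simp [e2]

lemma e2_add (a b : ZMod 2) : e2 (a + b) = e2 a * e2 b := by
  unfold e2
  rw [ZMod.val_add, ← pow_add]
  conv_rhs => rw [← Nat.div_add_mod (a.val + b.val) 2, pow_add, pow_mul]
  norm_num

lemma f4_two_val (b : ZMod 2) : f4 (2 * (b.val : ZMod 4)) = e2 b := by
  have h01 : ∀ c : ZMod 2, c = 0 ∨ c = 1 := by decide
  rcases h01 b with h | h <;> subst h
  · simp [f4, e2]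
  · have hL : (2 * (((1 : ZMod 2).val : ZMod 4))) = 2 := by decide
    rw [hL]
    show Complex.I ^ (2 : ZMod 4).val = e2 1
    have h2 : (2 : ZMod 4).val = 2 := rfl
    rw [h2, Complex.I_sq]
    unfold e2
    norm_num [show (1 : ZMod 2).val = 1 from rfl]

/-- The Gauss sum of a `ℤ/4`-quadratic enhancement of a nondegenerate symmetric bilinear
form on a finite-dimensional `ZMod 2`-vector space has squared absolute value equal to
the cardinality of `V`. -/
theorem arf_brown_gauss_sum_abs_sq
    (V : Type*) [AddCommGroup V] [Module (ZMod 2) V] [FiniteDimensional (ZMod 2) V]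
    [Fintype V]
    (B : LinearMap.BilinForm (ZMod 2) V)
    (hsymm : ∀ x y : V, B x y = B y x)
    (hnd : Function.Bijective fun x : V => (B x : Module.Dual (ZMod 2) V))
    (q : V → ZMod 4)
    (hq : ∀ x y : V, q (x + y) = q x + q y + 2 * ((B x y).val : ZMod 4)) :
    ‖∑ x : V, Complex.I ^ (q x).val‖ ^ 2 = Fintype.card V := by
  have hq0 : q 0 = 0 := by
    have h := hq 0 0
    simp at h
    exact h
  -- inner character sum
  have hinner : ∀ z : V, z ≠ 0 → ∑ y : V, e2 (B y z) = 0 := by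
    intro z hz
    have hy0 : ∃ y0 : V, B y0 z = 1 := by
      by_contra h
      push_neg at h
      have h01 : ∀ a : ZMod 2, a = 0 ∨ a = 1 := by decide
      have hall : ∀ y : V, B z y = 0 := by
        intro y
        rw [← hsymm]
        rcases h01 (B y z) with h0 | h1
        · exact h0
        · exact absurd h1 (h y)
      apply hz
      have : (B z : Module.Dual (ZMod 2) V) = (B 0 : Module.Dual (ZMod 2) V) := by
        ext y
        simp [hall y]
      exact hnd.injective this
    obtain ⟨y0, hy0⟩ := hy0
    have hshift : ∑ y : V, e2 (B y z) = ∑ y : V, e2 (B (y + y0) z) :=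
      (Fintype.sum_equiv (Equiv.addRight y0)
        (fun y => e2 (B (y + y0) z)) (fun y => e2 (B y z)) (fun _ => rfl)).symm
    have hneg : ∀ y : V, e2 (B (y + y0) z) = - e2 (B y z) := by
      intro y
      have : B (y + y0) z = B y z + B y0 z := by
        rw [map_add]; rfl
      rw [this, hy0, e2_add]
      have : e2 1 = -1 := by
        show ((-1 : ℂ)) ^ (1 : ZMod 2).val = -1
        have h1 : (1 : ZMod 2).val = 1 := rfl
        rw [h1, pow_one]
      rw [this]; ring
    rw [Finset.sum_congr rfl (fun y _ => hneg y), Finset.sum_neg_distrib] at hshift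
    linear_combination (1/2 : ℂ) * hshift
  set S := ∑ x : V, Complex.I ^ (q x).val with hS
  have hSf : S = ∑ x : V, f4 (q x) := rfl
  have hmul : S * (starRingEnd ℂ) S = (Fintype.card V : ℂ) := by
    rw [hSf, map_sum]
    have hconj : ∀ y : V, (starRingEnd ℂ) (f4 (q y)) = f4 (-(q y)) := fun y => f4_conj _
    rw [Finset.sum_congr rfl (fun y _ => hconj y), Finset.sum_mul_sum]
    have step : ∀ x y : V, f4 (q x) * f4 (-(q y)) = f4 (q x - q y) := by
      intro x y; rw [← f4_add, sub_eq_add_neg]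
    calc (∑ x : V, ∑ y : V, f4 (q x) * f4 (-(q y)))
        = ∑ y : V, ∑ x : V, f4 (q x - q y) := by
          rw [Finset.sum_comm]
          exact Finset.sum_congr rfl (fun y _ => Finset.sum_congr rfl (fun x _ => step x y))
      _ = ∑ y : V, ∑ z : V, f4 (q z) * e2 (B y z) := by
          refine Finset.sum_congr rfl (fun y _ => ?_)
          refine (Fintype.sum_equiv (Equiv.addLeft y)
            (fun z => f4 (q z) * e2 (B y z)) (fun x => f4 (q x - q y)) (fun z => ?_)).symm
          show f4 (q z) * e2 (B y z) = f4 (q (y + z) - q y)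
          have : q (y + z) - q y = q z + 2 * ((B y z).val : ZMod 4) := by
            rw [hq y z]; ring
          rw [this, f4_add, f4_two_val]
      _ = ∑ z : V, f4 (q z) * ∑ y : V, e2 (B y z) := by
          rw [Finset.sum_comm]
          exact Finset.sum_congr rfl (fun z _ => (Finset.mul_sum _ _ _).symm)
      _ = (Fintype.card V : ℂ) := by
          rw [Finset.sum_eq_single 0]
          · have : ∀ y : V, (B y) (0 : V) = 0 := fun y => map_zero (B y)
            simp [hq0, f4_zero, this, e2_zero, Finset.card_univ]
          · intro z _ hz
            rw [hinner z hz, mul_zero]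
          · intro h
            exact absurd (Finset.mem_univ 0) h
  have habs : ‖S‖ ^ 2 = Complex.normSq S := Complex.sq_norm S
  have : (Complex.normSq S : ℂ) = (Fintype.card V : ℂ) := by
    rw [← Complex.mul_conj, hmul]
  rw [habs]
  exact_mod_cast this
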